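/- (Independence of optimal parameters.) Let H be a symmetric positive definite n×n real matrix and let i ∈ {1, …, n} be any index. Then there exists an invertible n×n real matrix Γ such that Γ H Γᵀ is a diagonal matrix and the change of variables φ = (Γᵀ)⁻¹θ fixes the i-th coordinate: for every θ ∈ ℝⁿ, ((Γᵀ)⁻¹ θ)_i = θ_i. -/

import Mathlib

open Matrix

lemma stmt_8_aux {E : Type*} [NormedAddCommGroup E] [InnerProductSpace ℝ E] {n : ℕ}
    [NeZero n] (u : Fin n → E) (hu : LinearIndependent ℝ u) (f : E →ₗ[ℝ] ℝ) (l : Fin n) (htop : ∀ k, k ≤ l)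
    (hf0 : ∀ k, k ≠ l → f (u k) = 0) (hfl : f (u l) = 1) :
    ∃ v : Fin n → E, (∀ k, v k ≠ 0) ∧
      (∀ j k, j ≠ k → (inner ℝ (v j) (v k) : ℝ) = 0) ∧
      (∀ k, k ≠ l → f (v k) = 0) ∧ f (v l) = 1 := by
  haveI : WellFoundedLT (Fin n) := inferInstance
  set v : Fin n → E := InnerProductSpace.gramSchmidt ℝ u with hv
  have hv0 : ∀ k : Fin n, k ≠ l → f (v k) = 0 := by
    intro k hk
    have hmem := InnerProductSpace.gramSchmidt_mem_span ℝ u (le_refl k)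
    have hsub : Submodule.span ℝ (u '' Set.Iic k) ≤ LinearMap.ker f := by
      rw [Submodule.span_le]
      rintro x ⟨m, hm, rfl⟩
      have hmne : m ≠ l := by
        rintro rfl
        exact hk (le_antisymm (htop k) hm)
      exact hf0 m hmne
    exact hsub hmem
  refine ⟨v, fun k => InnerProductSpace.gramSchmidt_ne_zero (𝕜 := ℝ) k hu,
    fun j k hjk => InnerProductSpace.gramSchmidt_orthogonal ℝ u hjk, hv0, ?_⟩
  have h := InnerProductSpace.gramSchmidt_def'' ℝ u l
  have h2 := congrArg f h
  rw [← hv] at h2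
  rw [map_add, map_sum] at h2
  rw [Finset.sum_eq_zero (fun m hm => by
    rw [f.map_smul, hv0 m (Finset.mem_Iio.1 hm).ne, smul_zero]), add_zero, hfl] at h2
  exact h2.symm

/-- Independence of optimal parameters: for a symmetric positive definite `H` and any
index `i`, there is an invertible `G` (the `Γ` of the paper) such that `G H Gᵀ` is
diagonal and the change of variables `φ = (Gᵀ)⁻¹ θ` fixes the `i`-th coordinate. -/
theorem stmt_8 {n : ℕ} (H : Matrix (Fin n) (Fin n) ℝ)
    (hsym : H.IsSymm) (hpd : H.PosDef) (i : Fin n) :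
    ∃ G : Matrix (Fin n) (Fin n) ℝ, IsUnit G ∧ (G * H * Gᵀ).IsDiag ∧
      ∀ θ : Fin n → ℝ, (Gᵀ)⁻¹.mulVec θ i = θ i := by
  have hn : n - 1 < n := Nat.sub_lt i.pos one_pos
  set l : Fin n := ⟨n - 1, hn⟩ with hl
  set τ : Equiv.Perm (Fin n) := Equiv.swap i l with hτ
  have hτl : τ l = i := Equiv.swap_apply_right i l
  have hτi : τ i = l := Equiv.swap_apply_left i l
  have hτne : ∀ k : Fin n, k ≠ l → τ k ≠ i := by
    intro k hk h
    apply hk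
    have := congrArg τ h
    rwa [Equiv.swap_apply_self, hτi] at this
  set u : Fin n → (Fin n → ℝ) := fun k => Pi.single (τ k) 1 with hu
  have hu_li : LinearIndependent ℝ u := by
    have h1 : LinearIndependent ℝ (fun k : Fin n => Pi.single k (1 : ℝ)) := by
      have := (Pi.basisFun ℝ (Fin n)).linearIndependent
      convert this using 1
      funext k
      simp [Pi.basisFun_apply]
    exact h1.comp τ τ.injective
  haveI : NeZero n := ⟨i.pos.ne'⟩
  letI na : NormedAddCommGroup (Fin n → ℝ) := Matrix.toNormedAddCommGroup H hpd
  letI ip : @InnerProductSpace ℝ (Fin n → ℝ) _ (@NormedAddCommGroup.toSeminormedAddCommGroup _ na) :=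
    Matrix.toInnerProductSpace H hpd.posSemidef
  obtain ⟨v, hvne, horth, hv0', hvl'⟩ :=
    @stmt_8_aux (Fin n → ℝ) na ip n this u hu_li (LinearMap.proj i) l (fun k => Fin.le_def.2 (Nat.le_sub_one_of_lt k.2))
      (by
        intro k hk
        simp only [LinearMap.proj_apply, hu]
        exact Pi.single_eq_of_ne (Ne.symm (hτne k hk)) 1)
      (by simp only [LinearMap.proj_apply, hu, hτl]; exact Pi.single_eq_same i 1)
  have hv0 : ∀ k : Fin n, k ≠ l → v k i = 0 := hv0'
  have hvl : v l i = 1 := hvl'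
  have hinner : ∀ x y : Fin n → ℝ,
      (@inner ℝ _ ip.toInner x y : ℝ) = x ⬝ᵥ (H *ᵥ y) := by
    intro x y
    show (H *ᵥ y) ⬝ᵥ star x = x ⬝ᵥ (H *ᵥ y)
    rw [star_trivial, dotProduct_comm]
  set G : Matrix (Fin n) (Fin n) ℝ := Matrix.of fun k j => v (τ k) j with hG
  have hentry : ∀ j k : Fin n, (G * H * Gᵀ) j k =
      (@inner ℝ _ ip.toInner (v (τ j)) (v (τ k)) : ℝ) := by
    intro j k
    rw [hinner]
    simp only [Matrix.mul_apply, Matrix.transpose_apply, hG, Matrix.of_apply,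
      dotProduct, Matrix.mulVec, dotProduct, Finset.sum_mul, Finset.mul_sum]
    rw [Finset.sum_comm]
    congr 1; funext a; congr 1; funext b; ring
  have hGunit : IsUnit G := by
    rw [← Matrix.linearIndependent_rows_iff_isUnit]
    have h1 : LinearIndependent ℝ (v ∘ τ) := by
      refine @linearIndependent_of_ne_zero_of_inner_eq_zero ℝ _ _ na ip _ _
        (fun k => hvne (τ k)) ?_
      intro a b hab
      exact horth (τ a) (τ b) (fun h => hab (τ.injective h))
    exact h1
  have hcol : ∀ k : Fin n, G k i = if k = i then 1 else 0 := by
    intro k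
    by_cases hk : k = i
    · subst hk; simp only [hG, Matrix.of_apply, hτi, if_pos rfl]; exact hvl
    · rw [if_neg hk]
      refine hv0 (τ k) fun h => hk ?_
      have := congrArg τ h
      rwa [Equiv.swap_apply_self, hτl] at this
  refine ⟨G, hGunit, ?_, ?_⟩
  · intro j k hjk
    rw [hentry]
    exact horth (τ j) (τ k) (fun h => hjk (τ.injective h))
  · intro θ
    have hdet : IsUnit Gᵀ.det := by
      rw [Matrix.det_transpose]
      exact (Matrix.isUnit_iff_isUnit_det G).1 hGunit
    have hmul : Gᵀ *ᵥ ((Gᵀ)⁻¹ *ᵥ θ) = θ := by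
      rw [Matrix.mulVec_mulVec, Matrix.mul_nonsing_inv _ hdet, Matrix.one_mulVec]
    have h2 := congrFun hmul i
    have h3 : (Gᵀ *ᵥ ((Gᵀ)⁻¹ *ᵥ θ)) i = ((Gᵀ)⁻¹ *ᵥ θ) i := by
      simp only [Matrix.mulVec, dotProduct, Matrix.transpose_apply]
      rw [Finset.sum_eq_single i]
      · rw [hcol, if_pos rfl, one_mul]
      · intro b _ hb; rw [hcol, if_neg hb, zero_mul]
      · intro h; exact absurd (Finset.mem_univ i) h
    rw [← h2, h3]
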